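/- arXiv:2407.05622 — 4 statements merged into one kernel-verified Lean document; each statement's English description precedes it below -/
import Mathlib

section
/- The leap complexity is invariant under union closure: for any set system C ⊆ 2^[P] covering [P], if C' is the closure of C under pairwise unions, then Leap(C') = Leap(C). -/
open Finset

/-- Union of the first `i` sets of the list. -/
def prefUnion {P : ℕ} (L : List (Finset (Fin P))) (i : ℕ) : Finset (Fin P) :=
  (L.take i).foldr (· ∪ ·) ∅

/-- `max_i |U_i \ (U_1 ∪ … ∪ U_{i-1})|` for the sequence `L = [U_1, …, U_r]`. -/
def leapVal {P : ℕ} (L : List (Finset (Fin P))) : ℕ :=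
  (List.range L.length).foldr (fun i m => max ((L.getD i ∅ \ prefUnion L i).card) m) 0

/-- Leap complexity of a set system `C ⊆ 2^[P]`. -/
noncomputable def Leap {P : ℕ} (C : Set (Finset (Fin P))) : ℕ :=
  sInf { m | ∃ L : List (Finset (Fin P)),
    (∀ U ∈ L, U ∈ C) ∧ L.foldr (· ∪ ·) ∅ = Finset.univ ∧ leapVal L = m }

/-- Cover complexity of a set system `C ⊆ 2^[P]`. -/
noncomputable def Cover {P : ℕ} (C : Set (Finset (Fin P))) : ℕ :=
  Finset.univ.sup fun i : Fin P => sInf { n | ∃ U ∈ C, i ∈ U ∧ U.card = n }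

/-- Recursive form of the leap value, with accumulator. -/
def leapFrom {P : ℕ} (A : Finset (Fin P)) : List (Finset (Fin P)) → ℕ
  | [] => 0
  | U :: L => max (U \ A).card (leapFrom (A ∪ U) L)

lemma foldr_union_eq {P : ℕ} (l : List (Finset (Fin P))) (b : Finset (Fin P)) :
    l.foldr (· ∪ ·) b = l.foldr (· ∪ ·) ∅ ∪ b := by
  induction l with
  | nil => simp
  | cons x l ih => simp [ih, union_assoc]

lemma leapFrom_eq {P : ℕ} (L : List (Finset (Fin P))) :
    ∀ A : Finset (Fin P), leapFrom A L =
      (List.range L.length).foldr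
        (fun i m => max ((L.getD i ∅ \ (A ∪ prefUnion L i)).card) m) 0 := by
  induction L with
  | nil => intro A; simp [leapFrom]
  | cons U L ih =>
    intro A
    rw [List.length_cons, List.range_succ_eq_map, List.foldr_cons, List.foldr_map]
    have h1 : (fun (i : ℕ) (m : ℕ) =>
        max (((U :: L).getD (i + 1) ∅ \ (A ∪ prefUnion (U :: L) (i + 1))).card) m)
        = fun i m => max ((L.getD i ∅ \ ((A ∪ U) ∪ prefUnion L i)).card) m := by
      funext i m
      simp only [List.getD_eq_getElem?_getD, List.getElem?_cons_succ, prefUnion,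
        List.take_succ_cons, List.foldr_cons, union_assoc]
    rw [h1, ← ih (A ∪ U)]
    simp [leapFrom, prefUnion]

lemma leapVal_eq {P : ℕ} (L : List (Finset (Fin P))) : leapVal L = leapFrom ∅ L := by
  rw [leapFrom_eq L ∅]
  unfold leapVal
  have : (fun (i : ℕ) (m : ℕ) => max ((L.getD i ∅ \ (∅ ∪ prefUnion L i)).card) m)
      = fun i m => max ((L.getD i ∅ \ prefUnion L i).card) m := by
    funext i m
    rw [empty_union]
  rw [this]

lemma mem_foldr_union {P : ℕ} (L : List (Finset (Fin P))) (x : Fin P) :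
    x ∈ L.foldr (· ∪ ·) ∅ ↔ ∃ U ∈ L, x ∈ U := by
  induction L with
  | nil => simp
  | cons U L ih => simp [ih]

lemma leapFrom_append_le {P : ℕ} (l rest : List (Finset (Fin P))) :
    ∀ A : Finset (Fin P), leapFrom A (l ++ rest) ≤
      max ((l.foldr (· ∪ ·) ∅ \ A).card) (leapFrom (A ∪ l.foldr (· ∪ ·) ∅) rest) := by
  induction l with
  | nil => intro A; simp [leapFrom]
  | cons V l ih =>
    intro A
    simp only [List.cons_append, leapFrom, List.foldr_cons]
    have h1 : (V \ A).card ≤ ((V ∪ l.foldr (· ∪ ·) ∅) \ A).card := by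
      apply card_le_card; exact sdiff_subset_sdiff subset_union_left le_rfl
    have h2 : (l.foldr (· ∪ ·) ∅ \ (A ∪ V)).card ≤ ((V ∪ l.foldr (· ∪ ·) ∅) \ A).card := by
      apply card_le_card
      intro x hx
      simp only [mem_sdiff, mem_union, not_or] at hx ⊢
      tauto
    have h3 := ih (A ∪ V)
    have hassoc : A ∪ V ∪ l.foldr (· ∪ ·) ∅ = A ∪ (V ∪ l.foldr (· ∪ ·) ∅) := by
      rw [union_assoc]
    rw [hassoc] at h3
    calc max (V \ A).card (leapFrom (A ∪ V) (l ++ rest))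
        ≤ max (V \ A).card (max ((l.foldr (· ∪ ·) ∅ \ (A ∪ V)).card)
            (leapFrom (A ∪ (V ∪ l.foldr (· ∪ ·) ∅)) rest)) := by
          exact max_le_max le_rfl h3
      _ ≤ max (((V ∪ l.foldr (· ∪ ·) ∅) \ A).card)
            (leapFrom (A ∪ (V ∪ l.foldr (· ∪ ·) ∅)) rest) := by
          apply max_le
          · exact le_max_of_le_left h1
          · apply max_le
            · exact le_max_of_le_left h2
            · exact le_max_right _ _

lemma exists_refine {P : ℕ} (C : Set (Finset (Fin P)))
    (L : List (Finset (Fin P)))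
    (hD : ∀ U ∈ L, ∃ l : List (Finset (Fin P)),
      (∀ V ∈ l, V ∈ C) ∧ l.foldr (· ∪ ·) ∅ = U) :
    ∀ A : Finset (Fin P), ∃ L'' : List (Finset (Fin P)),
      (∀ V ∈ L'', V ∈ C) ∧ L''.foldr (· ∪ ·) ∅ = L.foldr (· ∪ ·) ∅ ∧
      leapFrom A L'' ≤ leapFrom A L := by
  induction L with
  | nil => intro A; exact ⟨[], by simp, rfl, le_rfl⟩
  | cons U L ih =>
    intro A
    obtain ⟨l, hlC, hlU⟩ := hD U List.mem_cons_self
    obtain ⟨L'', hC'', hU'', hle''⟩ := ih (fun V hV => hD V (List.mem_cons_of_mem _ hV)) (A ∪ U)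
    refine ⟨l ++ L'', ?_, ?_, ?_⟩
    · intro V hV
      rcases List.mem_append.1 hV with h | h
      · exact hlC V h
      · exact hC'' V h
    · rw [List.foldr_append, foldr_union_eq l, hlU, List.foldr_cons, hU'', union_comm]
    · calc leapFrom A (l ++ L'')
          ≤ max ((l.foldr (· ∪ ·) ∅ \ A).card) (leapFrom (A ∪ l.foldr (· ∪ ·) ∅) L'') :=
            leapFrom_append_le l L'' A
        _ = max ((U \ A).card) (leapFrom (A ∪ U) L'') := by rw [hlU]
        _ ≤ max ((U \ A).card) (leapFrom (A ∪ U) L) := max_le_max le_rfl hle''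
        _ = leapFrom A (U :: L) := rfl

/-- the leap complexity is invariant under union closure. -/
theorem leap_unionClosure {P : ℕ} (hP : 0 < P) (C C' : Set (Finset (Fin P)))
    (hcov : ∀ i : Fin P, ∃ U ∈ C, i ∈ U)
    (hsub : C ⊆ C')
    (hclosed : ∀ U ∈ C', ∀ V ∈ C', U ∪ V ∈ C')
    (hmin : ∀ D : Set (Finset (Fin P)), C ⊆ D →
      (∀ U ∈ D, ∀ V ∈ D, U ∪ V ∈ D) → C' ⊆ D) :
    Leap C' = Leap C := by
  -- a base covering list over C
  have hbase : ∃ L0 : List (Finset (Fin P)),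
      (∀ U ∈ L0, U ∈ C) ∧ L0.foldr (· ∪ ·) ∅ = Finset.univ := by
    refine ⟨List.ofFn (fun i : Fin P => (hcov i).choose), ?_, ?_⟩
    · intro U hU
      rw [List.mem_ofFn] at hU
      obtain ⟨i, rfl⟩ := hU
      exact (hcov i).choose_spec.1
    · apply Finset.eq_univ_of_forall
      intro x
      rw [mem_foldr_union]
      exact ⟨(hcov x).choose, by rw [List.mem_ofFn]; exact ⟨x, rfl⟩,
        (hcov x).choose_spec.2⟩
  obtain ⟨L0, hL0C, hL0u⟩ := hbase
  have hneC : { m | ∃ L : List (Finset (Fin P)),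
      (∀ U ∈ L, U ∈ C) ∧ L.foldr (· ∪ ·) ∅ = Finset.univ ∧ leapVal L = m }.Nonempty :=
    ⟨leapVal L0, L0, hL0C, hL0u, rfl⟩
  have hneC' : { m | ∃ L : List (Finset (Fin P)),
      (∀ U ∈ L, U ∈ C') ∧ L.foldr (· ∪ ·) ∅ = Finset.univ ∧ leapVal L = m }.Nonempty :=
    ⟨leapVal L0, L0, fun U hU => hsub (hL0C U hU), hL0u, rfl⟩
  -- every element of C' is a union of a list of elements of C
  have hdecomp : ∀ U ∈ C', ∃ l : List (Finset (Fin P)),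
      (∀ V ∈ l, V ∈ C) ∧ l.foldr (· ∪ ·) ∅ = U := by
    intro U hU
    have := hmin { U | ∃ l : List (Finset (Fin P)),
        (∀ V ∈ l, V ∈ C) ∧ l.foldr (· ∪ ·) ∅ = U } ?_ ?_ hU
    · exact this
    · intro V hV
      exact ⟨[V], by simpa using hV, by simp⟩
    · rintro U1 ⟨l1, hl1, rfl⟩ U2 ⟨l2, hl2, rfl⟩
      refine ⟨l1 ++ l2, ?_, ?_⟩
      · intro V hV
        rcases List.mem_append.1 hV with h | h
        · exact hl1 V h
        · exact hl2 V h
      · rw [List.foldr_append, foldr_union_eq l1]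
  apply le_antisymm
  · -- Leap C' ≤ Leap C, since any C-sequence is a C'-sequence
    obtain ⟨L, hLC, hLu, hLv⟩ := Nat.sInf_mem hneC
    have hEq : Leap C = leapVal L := hLv.symm
    rw [hEq]
    exact Nat.sInf_le ⟨L, fun U hU => hsub (hLC U hU), hLu, rfl⟩
  · -- Leap C ≤ Leap C'
    obtain ⟨L, hLC', hLu, hLv⟩ := Nat.sInf_mem hneC'
    obtain ⟨L'', hC'', hU'', hle''⟩ :=
      exists_refine C L (fun U hU => hdecomp U (hLC' U hU)) ∅
    have h1 : Leap C ≤ leapVal L'' :=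
      Nat.sInf_le ⟨L'', hC'', by rw [hU'', hLu], rfl⟩
    have h2 : leapVal L'' ≤ leapVal L := by
      rw [leapVal_eq, leapVal_eq]; exact hle''
    calc Leap C ≤ leapVal L'' := h1
      _ ≤ leapVal L := h2
      _ = Leap C' := hLv
end

section
/- Binary-output identity underlying CSQ = SQ: let (y, z) be a random pair where y takes values in {a, b} ⊆ ℝ and z = (z_1, …, z_P) has independent coordinates given nothing (product marginal), and let T : {a,b} → ℝ and T_i with E[T_i(z_i)] = 0 for each i in a subset U ⊆ [P]. Then E[T(y) ∏_{i∈U} T_i(z_i)] = (T(b) − T(a)) · P(y = b) · E[∏_{i∈U} T_i(z_i) | y = b]. Consequently, if E[T(y) ∏_{i∈U} T_i(z_i)] ≠ 0 for some T, then it is nonzero for T = identity (when a ≠ b). -/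
open MeasureTheory

/-- binary-output identity underlying CSQ = SQ. -/
theorem binary_output_csq_eq_sq {X : Type*} [MeasurableSpace X] {P : ℕ}
    (μx : Measure X) [IsProbabilityMeasure μx]
    (μ : Measure (ℝ × (Fin P → X))) [IsProbabilityMeasure μ]
    (a b : ℝ)
    (hy : ∀ᵐ p ∂μ, p.1 = a ∨ p.1 = b)
    (hmarg : μ.map Prod.snd = Measure.pi fun _ : Fin P => μx)
    (U : Finset (Fin P)) (hU : U.Nonempty)
    (Ti : Fin P → X → ℝ)
    (hTmeas : ∀ i, Measurable (Ti i))
    (hTmean : ∀ i ∈ U, ∫ x, Ti i x ∂μx = 0)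
    (T : ℝ → ℝ)
    (hint : Integrable (fun p => T p.1 * ∏ i ∈ U, Ti i (p.2 i)) μ)
    (hint' : Integrable (fun p => ∏ i ∈ U, Ti i (p.2 i)) μ)
    (hint'' : Integrable (fun p => p.1 * ∏ i ∈ U, Ti i (p.2 i)) μ) :
    (∫ p, T p.1 * ∏ i ∈ U, Ti i (p.2 i) ∂μ
        = (T b - T a) *
          ∫ p in {p : ℝ × (Fin P → X) | p.1 = b}, ∏ i ∈ U, Ti i (p.2 i) ∂μ) ∧
    (a ≠ b → (∫ p, T p.1 * ∏ i ∈ U, Ti i (p.2 i) ∂μ) ≠ 0 →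
        (∫ p, p.1 * ∏ i ∈ U, Ti i (p.2 i) ∂μ) ≠ 0) := by
  classical
  letI : MeasureSpace X := ⟨μx⟩
  have hmeasf : Measurable (fun z : Fin P → X => ∏ i ∈ U, Ti i (z i)) :=
    Finset.measurable_prod _ (fun i _ => (hTmeas i).comp (measurable_pi_apply i))
  -- the mean of the product is zero
  have E0 : ∫ p, ∏ i ∈ U, Ti i (p.2 i) ∂μ = 0 := by
    have h1 : ∫ p, ∏ i ∈ U, Ti i (p.2 i) ∂μ
        = ∫ z, ∏ i ∈ U, Ti i (z i) ∂(μ.map Prod.snd) :=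
      (integral_map measurable_snd.aemeasurable hmeasf.aestronglyMeasurable).symm
    rw [h1, hmarg]
    have h2 : ∀ z : Fin P → X, ∏ i ∈ U, Ti i (z i)
        = ∏ i, (fun i x => if i ∈ U then Ti i x else 1) i (z i) := by
      intro z
      simp only []
      rw [Finset.prod_ite_mem, Finset.univ_inter]
    have h3 : (Measure.pi fun _ : Fin P => μx) = (volume : Measure (Fin P → X)) := by
      rfl
    simp_rw [h2, h3]
    rw [← h3, integral_fintype_prod_eq_prod (𝕜 := ℝ)
      (fun i x => if i ∈ U then Ti i x else 1)]
    obtain ⟨i₀, hi₀⟩ := hU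
    refine Finset.prod_eq_zero (Finset.mem_univ i₀) ?_
    simp only [hi₀, if_true]
    exact hTmean i₀ hi₀
  have hs : MeasurableSet {p : ℝ × (Fin P → X) | p.1 = b} :=
    measurable_fst (measurableSet_singleton b)
  -- key identity, for an arbitrary T with integrability
  have key : ∀ S : ℝ → ℝ, Integrable (fun p => S p.1 * ∏ i ∈ U, Ti i (p.2 i)) μ →
      ∫ p, S p.1 * ∏ i ∈ U, Ti i (p.2 i) ∂μ
        = (S b - S a) * ∫ p in {p : ℝ × (Fin P → X) | p.1 = b}, ∏ i ∈ U, Ti i (p.2 i) ∂μ := by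
    intro S hS
    have hae : ∀ᵐ p ∂μ, S p.1 * ∏ i ∈ U, Ti i (p.2 i)
        = S a * ∏ i ∈ U, Ti i (p.2 i)
          + (S b - S a) * ({p : ℝ × (Fin P → X) | p.1 = b}.indicator
              (fun p => ∏ i ∈ U, Ti i (p.2 i)) p) := by
      filter_upwards [hy] with p hp
      by_cases hb : p.1 = b
      · simp [Set.indicator_of_mem, hb]
        ring
      · rcases hp with hpa | hpb
        · rw [Set.indicator_of_notMem (s := {p : ℝ × (Fin P → X) | p.1 = b}) hb, hpa]; ring
        · exact absurd hpb hb
    rw [integral_congr_ae hae]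
    have hind : Integrable ({p : ℝ × (Fin P → X) | p.1 = b}.indicator
        (fun p => ∏ i ∈ U, Ti i (p.2 i))) μ := hint'.indicator hs
    rw [integral_add (hint'.const_mul (S a)) (hind.const_mul _),
      integral_const_mul, integral_const_mul, E0, mul_zero, zero_add,
      integral_indicator hs]
  refine ⟨key T hint, fun hab hne => ?_⟩
  have hT := key T hint
  have hId := key id hint''
  simp only [id] at hId
  rw [hId]
  rw [hT] at hne
  rcases mul_ne_zero_iff.1 hne with ⟨h1, h2⟩
  exact mul_ne_zero (sub_ne_zero.2 (Ne.symm hab)) h2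
end

section
/- Let z_1, …, z_P be i.i.d. standard Gaussian random variables, y = z_1 z_2 ⋯ z_P, and τ > 0. Then for each i ∈ [P], E[(z_i² − 1) · 1{|y| ≥ τ}] > 0. -/
open MeasureTheory ProbabilityTheory

open Real Filter Set

open scoped ENNReal NNReal

noncomputable def gc : ℝ := (Real.sqrt (2 * π))⁻¹

lemma gc_pos : 0 < gc := by
  unfold gc
  positivity

lemma gpdf_eq : gaussianPDFReal 0 1 = fun x => gc * Real.exp (-x ^ 2 / 2) := by
  funext x
  simp [gaussianPDFReal, gc]

lemma gauss_eq_withDensity :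
    gaussianReal 0 1 = volume.withDensity
      (fun x => ((gaussianPDFReal 0 1 x).toNNReal : ℝ≥0∞)) := by
  rw [gaussianReal_of_var_ne_zero 0 one_ne_zero]
  rfl

lemma gauss_integral_eq (g : ℝ → ℝ) :
    ∫ x, g x ∂(gaussianReal 0 1) = ∫ x, gaussianPDFReal 0 1 x * g x := by
  rw [gauss_eq_withDensity,
    integral_withDensity_eq_integral_smul
      ((measurable_gaussianPDFReal 0 1).real_toNNReal) g]
  congr 1
  funext x
  simp [NNReal.smul_def, Real.coe_toNNReal _ (gaussianPDFReal_nonneg 0 1 x)]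

lemma gauss_integrable_iff (g : ℝ → ℝ) :
    Integrable g (gaussianReal 0 1) ↔
      Integrable (fun x => gaussianPDFReal 0 1 x * g x) volume := by
  rw [gauss_eq_withDensity,
    integrable_withDensity_iff_integrable_smul
      ((measurable_gaussianPDFReal 0 1).real_toNNReal)]
  constructor <;> intro h <;> refine h.congr (Filter.Eventually.of_forall fun x => ?_) <;>
    simp [NNReal.smul_def, Real.coe_toNNReal _ (gaussianPDFReal_nonneg 0 1 x)]

-- integrability of (x²-1)exp(-x²/2) over volume
lemma integrable_sq_exp : Integrable (fun x : ℝ => x ^ 2 * Real.exp (-x ^ 2 / 2)) volume := by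
  have h := integrable_rpow_mul_exp_neg_mul_sq (b := 1/2) (by norm_num) (s := 2) (by norm_num)
  refine h.congr (Filter.Eventually.of_forall fun x => ?_)
  have h2 : x ^ (2:ℝ) = x ^ (2:ℕ) := by
    rw [← Real.rpow_natCast x 2]; norm_num
  show x ^ (2:ℝ) * Real.exp (-(1/2) * x ^ 2) = _
  rw [h2]
  push_cast
  ring_nf

lemma integrable_exp_sq : Integrable (fun x : ℝ => Real.exp (-x ^ 2 / 2)) volume := by
  have h := integrable_exp_neg_mul_sq (b := 1/2) (by norm_num)
  refine h.congr (Filter.Eventually.of_forall fun x => ?_)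
  ring_nf

lemma integrable_psi (c : ℝ) :
    Integrable (fun x : ℝ => c * ((x ^ 2 - 1) * Real.exp (-x ^ 2 / 2))) volume := by
  have : (fun x : ℝ => c * ((x ^ 2 - 1) * Real.exp (-x ^ 2 / 2)))
      = fun x => c * (x ^ 2 * Real.exp (-x ^ 2 / 2)) - c * Real.exp (-x ^ 2 / 2) := by
    funext x; ring
  rw [this]
  exact ((integrable_sq_exp.const_mul c).sub (integrable_exp_sq.const_mul c))

lemma hasDerivAt_F (c x : ℝ) :
    HasDerivAt (fun x : ℝ => c * (-x * Real.exp (-x ^ 2 / 2)))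
      (c * ((x ^ 2 - 1) * Real.exp (-x ^ 2 / 2))) x := by
  have h1 : HasDerivAt (fun x : ℝ => -x ^ 2 / 2) (-x) x := by
    have := (hasDerivAt_pow 2 x).neg.div_const 2
    refine this.congr_deriv ?_
    simp
    ring
  have h2 : HasDerivAt (fun x : ℝ => Real.exp (-x ^ 2 / 2))
      (Real.exp (-x ^ 2 / 2) * (-x)) x := h1.exp
  have h3 : HasDerivAt (fun x : ℝ => -x) (-1) x := (hasDerivAt_id x).neg
  have := (h3.mul h2).const_mul c
  refine this.congr_deriv ?_
  ring

lemma tendsto_F_atTop (c : ℝ) :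
    Tendsto (fun x : ℝ => c * (-x * Real.exp (-x ^ 2 / 2))) atTop (nhds 0) := by
  have h0 : Tendsto (fun x : ℝ => x * Real.exp (-x ^ 2 / 2)) atTop (nhds 0) := by
    have hlo := rpow_mul_exp_neg_mul_sq_isLittleO_exp_neg (b := 1/2) (by norm_num) 1
    have hexp : Tendsto (fun x : ℝ => Real.exp (-(1/2) * x)) atTop (nhds 0) := by
      apply Real.tendsto_exp_atBot.comp
      exact Tendsto.const_mul_atTop_of_neg (by norm_num) tendsto_id
    have := hlo.isBigO.trans_tendsto hexp
    refine this.congr (fun x => ?_)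
    rw [Real.rpow_one]
    ring_nf
  have := (h0.const_mul (-c))
  simpa [mul_comm, mul_assoc, neg_mul, mul_neg] using this

lemma tendsto_F_atBot (c : ℝ) :
    Tendsto (fun x : ℝ => c * (-x * Real.exp (-x ^ 2 / 2))) atBot (nhds 0) := by
  have h := (tendsto_F_atTop (-c)).comp tendsto_neg_atBot_atTop
  refine h.congr (fun x => ?_)
  simp only [Function.comp]
  ring_nf

lemma integral_Ici_psi (c a : ℝ) :
    ∫ x in Ici a, c * ((x ^ 2 - 1) * Real.exp (-x ^ 2 / 2))
      = c * (a * Real.exp (-a ^ 2 / 2)) := by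
  rw [integral_Ici_eq_integral_Ioi]
  rw [integral_Ioi_of_hasDerivAt_of_tendsto' (fun x _ => hasDerivAt_F c x)
      ((integrable_psi c).integrableOn) (tendsto_F_atTop c)]
  ring

lemma integral_Iic_psi (c a : ℝ) :
    ∫ x in Iic (-a), c * ((x ^ 2 - 1) * Real.exp (-x ^ 2 / 2))
      = c * (a * Real.exp (-a ^ 2 / 2)) := by
  rw [integral_Iic_of_hasDerivAt_of_tendsto' (fun x _ => hasDerivAt_F c x)
      ((integrable_psi c).integrableOn) (tendsto_F_atBot c)]
  ring_nf

lemma inner_pos {a : ℝ} (ha : 0 < a) :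
    0 < ∫ x, (x ^ 2 - 1) * (if a ≤ |x| then (1:ℝ) else 0) ∂(gaussianReal 0 1) := by
  rw [gauss_integral_eq]
  have hset : {x : ℝ | a ≤ |x|} = Iic (-a) ∪ Ici a := by
    ext x
    simp only [mem_setOf_eq, mem_union, mem_Iic, mem_Ici, le_abs, le_neg]
    tauto
  have hind : (fun x : ℝ => gaussianPDFReal 0 1 x * ((x ^ 2 - 1) * (if a ≤ |x| then (1:ℝ) else 0)))
      = Set.indicator (Iic (-a) ∪ Ici a)
          (fun x => gc * ((x ^ 2 - 1) * Real.exp (-x ^ 2 / 2))) := by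
    funext x
    rw [gpdf_eq, ← hset]
    by_cases h : a ≤ |x|
    · simp only [Set.indicator, mem_setOf_eq, h, if_true]
      ring
    · simp only [Set.indicator, mem_setOf_eq, h, if_false]
      simp
  rw [hind, integral_indicator (measurableSet_Iic.union measurableSet_Ici),
    setIntegral_union (Set.Iic_disjoint_Ici.2 (by linarith)) measurableSet_Ici
      ((integrable_psi gc).integrableOn) ((integrable_psi gc).integrableOn),
    integral_Iic_psi, integral_Ici_psi]
  have := gc_pos
  positivity

instance : NullSingletonClass (gaussianReal 0 1) := by
  constructor
  intro x
  rw [gauss_eq_withDensity, withDensity_apply _ (measurableSet_singleton x)]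
  exact setLIntegral_measure_zero _ _ (measure_singleton x)

lemma integrable_sq_add_one_gauss : Integrable (fun x : ℝ => x ^ 2 + 1) (gaussianReal 0 1) := by
  rw [gauss_integrable_iff]
  have : (fun x : ℝ => gaussianPDFReal 0 1 x * (x ^ 2 + 1))
      = fun x => gc * (x ^ 2 * Real.exp (-x ^ 2 / 2)) + gc * Real.exp (-x ^ 2 / 2) := by
    funext x; rw [gpdf_eq]; ring
  rw [this]
  exact (integrable_sq_exp.const_mul gc).add (integrable_exp_sq.const_mul gc)

/-- for i.i.d. standard Gaussians `z_1,…,z_P`, `y = ∏ z_j` and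
any `τ > 0`, `E[(z_i² − 1)·1{|y| ≥ τ}] > 0`. -/
theorem gaussian_parity_sq_detectable {P : ℕ} (i : Fin P) (τ : ℝ) (hτ : 0 < τ) :
    0 < ∫ z : Fin P → ℝ,
        (z i ^ 2 - 1) * (if τ ≤ |∏ j, z j| then (1 : ℝ) else 0)
        ∂(Measure.pi fun _ : Fin P => gaussianReal 0 1) := by
  have hP : P ≠ 0 := by rintro rfl; exact i.elim0
  obtain ⟨n, rfl⟩ := Nat.exists_eq_succ_of_ne_zero hP
  set μ := gaussianReal 0 1 with hμ
  set ν : Measure (Fin n → ℝ) := Measure.pi fun _ => μ with hν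
  set F : ℝ × (Fin n → ℝ) → ℝ :=
    fun p => (p.1 ^ 2 - 1) * (if τ ≤ |p.1 * ∏ k, p.2 k| then (1:ℝ) else 0) with hF
  -- measurability of F
  have hFmeas : Measurable F := by
    apply Measurable.mul
    · exact ((measurable_fst.pow_const 2).sub measurable_const)
    · refine Measurable.ite ?_ measurable_const measurable_const
      exact measurableSet_le measurable_const
        ((measurable_fst.mul (Finset.measurable_prod _
          (fun k _ => (measurable_pi_apply k).comp measurable_snd))).abs)
  -- integrability of F
  have hFint : Integrable F (μ.prod ν) := by
    have hbound : Integrable (fun p : ℝ × (Fin n → ℝ) => p.1 ^ 2 + 1) (μ.prod ν) := by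
      have hmap : (μ.prod ν).map Prod.fst = μ := by
        rw [Measure.map_fst_prod]
        simp [hν]
      have h1 : Integrable (fun x : ℝ => x ^ 2 + 1) ((μ.prod ν).map Prod.fst) := by
        rw [hmap]; exact integrable_sq_add_one_gauss
      exact (integrable_map_measure h1.aestronglyMeasurable
        measurable_fst.aemeasurable).mp h1
    refine hbound.mono' hFmeas.aestronglyMeasurable
      (Filter.Eventually.of_forall fun p => ?_)
    have habs : ‖F p‖ = |p.1 ^ 2 - 1| * |(if τ ≤ |p.1 * ∏ k, p.2 k| then (1:ℝ) else 0)| := by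
      rw [hF, Real.norm_eq_abs]
      exact abs_mul _ _
    rw [habs]
    have h1 : |(if τ ≤ |p.1 * ∏ k, p.2 k| then (1:ℝ) else 0)| ≤ 1 := by
      split <;> simp
    have h2 : |p.1 ^ 2 - 1| ≤ p.1 ^ 2 + 1 := by
      rw [abs_sub_le_iff]
      constructor <;> nlinarith [sq_nonneg p.1]
    calc |p.1 ^ 2 - 1| * |(if τ ≤ |p.1 * ∏ k, p.2 k| then (1:ℝ) else 0)|
        ≤ |p.1 ^ 2 - 1| * 1 := by
          exact mul_le_mul_of_nonneg_left h1 (abs_nonneg _)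
      _ ≤ p.1 ^ 2 + 1 := by rw [mul_one]; exact h2
  -- change of variables
  have hchg : (∫ z : Fin (n+1) → ℝ,
        (z i ^ 2 - 1) * (if τ ≤ |∏ j, z j| then (1 : ℝ) else 0)
        ∂(Measure.pi fun _ : Fin (n+1) => gaussianReal 0 1))
      = ∫ p, F p ∂(μ.prod ν) := by
    have hmp := (measurePreserving_piFinSuccAbove (fun _ : Fin (n+1) => μ) i).symm
    rw [← hmp.integral_comp'
      (fun z => (z i ^ 2 - 1) * (if τ ≤ |∏ j, z j| then (1 : ℝ) else 0))]
    apply integral_congr_ae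
    filter_upwards with p
    rw [hF]
    simp only [MeasurableEquiv.piFinSuccAbove_symm_apply]
    rw [Fin.prod_univ_succAbove (fun j => (Fin.insertNthEquiv (fun _ => ℝ) i) p j) i]
    simp [Fin.insertNthEquiv]
  rw [hchg, integral_prod_symm F hFint]
  -- positivity of the outer integral
  set H : (Fin n → ℝ) → ℝ := fun w => ∫ x, F (x, w) ∂μ with hH
  have hprod_ne : ∀ᵐ w ∂ν, (∏ k, w k) ≠ 0 := by
    have : ∀ᵐ w ∂ν, ∀ k, w k ≠ 0 := by
      rw [ae_all_iff]
      intro k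
      exact Measure.ae_eval_ne _ k 0
    filter_upwards [this] with w hw
    rw [Finset.prod_ne_zero_iff]
    exact fun k _ => hw k
  have hpos : ∀ᵐ w ∂ν, 0 < H w := by
    filter_upwards [hprod_ne] with w hw
    have hc : 0 < |∏ k, w k| := abs_pos.2 hw
    have ha : 0 < τ / |∏ k, w k| := div_pos hτ hc
    have : H w = ∫ x, (x ^ 2 - 1) *
        (if τ / |∏ k, w k| ≤ |x| then (1:ℝ) else 0) ∂(gaussianReal 0 1) := by
      rw [hH, hF]
      apply integral_congr_ae
      filter_upwards with x
      congr 1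
      refine if_congr ?_ rfl rfl
      rw [abs_mul]
      exact (div_le_iff₀ hc).symm
    rw [this]
    exact inner_pos ha
  have hHint : Integrable H ν := hFint.integral_prod_right
  have hnonneg : 0 ≤ᵐ[ν] H := by filter_upwards [hpos] with w hw; exact hw.le
  rw [integral_pos_iff_support_of_nonneg_ae hnonneg hHint]
  have h1 : ν {w | ¬ 0 < H w} = 0 := by
    rw [← ae_iff]
    exact hpos
  have hcompl : ν (Function.support H)ᶜ = 0 := by
    apply measure_mono_null _ h1
    intro w hw
    simp only [Function.mem_support, not_not, mem_compl_iff, mem_setOf_eq] at hw ⊢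
    intro hlt
    exact hlt.ne' (by simpa using hw)
  rw [pos_iff_ne_zero]
  intro hzero
  have : (1:ℝ≥0∞) ≤ 0 := by
    calc (1:ℝ≥0∞) = ν univ := measure_univ.symm
      _ = ν (Function.support H ∪ (Function.support H)ᶜ) := by rw [union_compl_self]
      _ ≤ ν (Function.support H) + ν (Function.support H)ᶜ := measure_union_le _ _
      _ = 0 := by rw [hzero, hcompl, add_zero]
  simp at this
end

section
/- Span of exponential-loss gradients approximates monomials: let μ be a probability measure on [−M, M] ⊂ ℝ. Then the closed linear span in L²(μ) of the family {y ↦ y e^{−u y} : u ∈ ℝ} contains every monomial y ↦ y^k (k ≥ 1), and hence is dense in the closed span of {y ↦ y^k : k ≥ 1} ∪ {1} minus constants; in particular, span{y ↦ y e^{−uy}} ∪ {constants} is dense in L²(μ). -/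
open MeasureTheory
open scoped ENNReal
namespace ExpAux

lemma span_extract {α N : Type*} [AddCommMonoid N] [Module ℝ N]
    (f : α → N) {x : N} (hx : x ∈ Submodule.span ℝ (Set.range f)) :
    ∃ (m : ℕ) (c : Fin m → ℝ) (u : Fin m → α), x = ∑ i, c i • f (u i) := by
  classical
  rw [Finsupp.mem_span_range_iff_exists_finsupp] at hx
  obtain ⟨c, hc⟩ := hx
  refine ⟨c.support.card, fun i => c (c.support.equivFin.symm i),
    fun i => (c.support.equivFin.symm i : α), ?_⟩
  rw [← hc, Finsupp.sum, ← Finset.sum_coe_sort (c.support)]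
  exact Fintype.sum_equiv c.support.equivFin _ _ (fun a => by simp)
variable (M : ℝ)
noncomputable def e (u : ℝ) : C(Set.Icc (-M) M, ℝ) :=
  ⟨fun y => Real.exp (-u * y), by fun_prop⟩

noncomputable def w (u : ℝ) : C(Set.Icc (-M) M, ℝ) :=
  ⟨fun y => (y : ℝ) * Real.exp (-u * y), by fun_prop⟩

noncomputable def idc : C(Set.Icc (-M) M, ℝ) := ⟨fun y => (y : ℝ), by fun_prop⟩

noncomputable def pk (k : ℕ) : C(Set.Icc (-M) M, ℝ) := ⟨fun y => (y : ℝ) ^ k, by fun_prop⟩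

lemma e_mul (u v : ℝ) : e M u * e M v = e M (u + v) := by
  ext y
  simp only [e, ContinuousMap.mul_apply, ContinuousMap.coe_mk, ← Real.exp_add]
  ring_nf

lemma e_zero : e M 0 = 1 := by
  ext y; simp [e]

lemma one_mem_spanE : (1 : C(Set.Icc (-M) M, ℝ)) ∈ Submodule.span ℝ (Set.range (e M)) := by
  rw [← e_zero M]; exact Submodule.subset_span ⟨0, rfl⟩

lemma mul_mem_spanE : ∀ x y : C(Set.Icc (-M) M, ℝ),
    x ∈ Submodule.span ℝ (Set.range (e M)) → y ∈ Submodule.span ℝ (Set.range (e M)) →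
    x * y ∈ Submodule.span ℝ (Set.range (e M)) := by
  intro x y hx hy
  induction hx using Submodule.span_induction with
  | mem a ha =>
    induction hy using Submodule.span_induction with
    | mem b hb =>
      obtain ⟨u, rfl⟩ := ha; obtain ⟨v, rfl⟩ := hb
      rw [e_mul]
      exact Submodule.subset_span ⟨u + v, rfl⟩
    | zero => rw [mul_zero]; exact Submodule.zero_mem _
    | add b c _ _ hb hc => rw [mul_add]; exact Submodule.add_mem _ hb hc
    | smul r b _ hb => rw [mul_smul_comm]; exact Submodule.smul_mem _ r hb
  | zero => rw [zero_mul]; exact Submodule.zero_mem _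
  | add a b _ _ ha hb => rw [add_mul]; exact Submodule.add_mem _ ha hb
  | smul r a _ ha => rw [smul_mul_assoc]; exact Submodule.smul_mem _ r ha

lemma expA_closure (hM : 0 < M) : (((Submodule.span ℝ (Set.range (e M))).toSubalgebra
    (one_mem_spanE M) (mul_mem_spanE M)) : Subalgebra ℝ _).topologicalClosure = ⊤ := by
  apply ContinuousMap.subalgebra_topologicalClosure_eq_top_of_separatesPoints
  intro x y hxy
  refine ⟨e M 1, ⟨e M 1, Submodule.subset_span ⟨1, rfl⟩, rfl⟩, ?_⟩
  simp only [e, ContinuousMap.coe_mk]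
  intro h
  apply hxy
  have := Real.exp_injective h
  ext
  linarith


/-- approximate any continuous map by elements of the exponential span -/
lemma exp_approx (hM : 0 < M) (f : C(Set.Icc (-M) M, ℝ)) {δ : ℝ} (hδ : 0 < δ) :
    ∃ g ∈ Submodule.span ℝ (Set.range (e M)), ‖f - g‖ < δ := by
  have h1 : f ∈ (((Submodule.span ℝ (Set.range (e M))).toSubalgebra
      (one_mem_spanE M) (mul_mem_spanE M)) : Subalgebra ℝ _).topologicalClosure := by
    rw [expA_closure M hM]; trivial
  have h2 : f ∈ closure ((Submodule.span ℝ (Set.range (e M)) : Set C(Set.Icc (-M) M, ℝ))) := h1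
  rw [Metric.mem_closure_iff] at h2
  obtain ⟨g, hg, hdist⟩ := h2 δ hδ
  exact ⟨g, hg, by rwa [← dist_eq_norm]⟩

noncomputable def V : Submodule ℝ C(Set.Icc (-M) M, ℝ) := Submodule.span ℝ (Set.range (w M))

lemma pk_mem_closure (hM : 0 < M) (k : ℕ) : pk M (k + 1) ∈ (V M).topologicalClosure := by
  have : pk M (k+1) ∈ closure ((V M : Set C(Set.Icc (-M) M, ℝ))) := by
    rw [Metric.mem_closure_iff]
    intro δ hδ
    have hδ' : 0 < δ / (M + 1) := by positivity
    obtain ⟨g, hg, hng⟩ := exp_approx M hM (pk M k) hδ'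
    refine ⟨idc M * g, ?_, ?_⟩
    · -- idc * g ∈ V
      have : idc M * g ∈ Submodule.map (LinearMap.mulLeft ℝ (idc M))
          (Submodule.span ℝ (Set.range (e M))) := ⟨g, hg, rfl⟩
      rw [Submodule.map_span] at this
      refine Submodule.span_le.mpr ?_ this
      rintro _ ⟨_, ⟨u, rfl⟩, rfl⟩
      refine Submodule.subset_span ⟨u, ?_⟩
      ext y
      simp [idc, e, w, mul_comm]
    · rw [dist_eq_norm]
      have hne : Nonempty (Set.Icc (-M) M) := ⟨⟨0, by constructor <;> linarith⟩⟩
      rw [ContinuousMap.norm_lt_iff _ hδ]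
      intro y
      have h1 : |(y : ℝ)| ≤ M := abs_le.mpr ⟨y.2.1, y.2.2⟩
      have h2 : ‖(pk M k - g) y‖ ≤ ‖pk M k - g‖ := ContinuousMap.norm_coe_le_norm _ y
      have h3 : ‖(pk M k - g) y‖ < δ / (M + 1) := lt_of_le_of_lt h2 hng
      have : ((pk M (k+1) - idc M * g) y : ℝ) = (y : ℝ) * ((pk M k - g) y) := by
        simp [pk, idc, pow_succ]
        ring
      rw [Real.norm_eq_abs, this, abs_mul]
      calc |(y:ℝ)| * |((pk M k - g) y : ℝ)| ≤ M * |((pk M k - g) y : ℝ)| := by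
              apply mul_le_mul_of_nonneg_right h1 (abs_nonneg _)
        _ < M * (δ / (M + 1)) := by
              apply mul_lt_mul_of_pos_left _ hM
              exact h3
        _ < δ := by
              have h : M / (M + 1) < 1 := by
                rw [div_lt_one (by linarith)]; linarith
              calc M * (δ / (M + 1)) = (M / (M + 1)) * δ := by ring
                _ < 1 * δ := mul_lt_mul_of_pos_right h hδ
                _ = δ := one_mul δ
  exact this


noncomputable def K : Submodule ℝ C(Set.Icc (-M) M, ℝ) :=
  (Submodule.span ℝ {(1 : C(Set.Icc (-M) M, ℝ))} ⊔ V M).topologicalClosure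

lemma pk_mem_K (hM : 0 < M) (n : ℕ) : pk M n ∈ K M := by
  cases n with
  | zero =>
    apply Submodule.le_topologicalClosure
    apply Submodule.mem_sup_left
    have : pk M 0 = (1 : C(Set.Icc (-M) M, ℝ)) := by ext y; simp [pk]
    rw [this]
    exact Submodule.mem_span_singleton_self _
  | succ k =>
    have h1 := pk_mem_closure M hM k
    exact Submodule.topologicalClosure_mono le_sup_right h1

lemma poly_le_K (hM : 0 < M) :
    ∀ f ∈ polynomialFunctions (Set.Icc (-M) M), f ∈ K M := by
  intro f hf
  have : f ∈ (polynomialFunctions (Set.Icc (-M) M) : Set C(Set.Icc (-M) M, ℝ)) := hf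
  rw [polynomialFunctions_coe] at this
  obtain ⟨p, rfl⟩ := this
  clear hf
  induction p using Polynomial.induction_on' with
  | add p q hp hq =>
    rw [map_add]
    exact Submodule.add_mem _ hp hq
  | monomial n a =>
    have : (Polynomial.monomial n a : Polynomial ℝ) = a • Polynomial.X ^ n := by
      rw [Polynomial.smul_X_eq_monomial]
    rw [this, _root_.map_smul, map_pow]
    apply Submodule.smul_mem
    have : (Polynomial.toContinuousMapOnAlgHom (Set.Icc (-M) M)) Polynomial.X ^ n = pk M n := by
      ext y; simp [pk, Polynomial.toContinuousMapOn, Polynomial.toContinuousMap]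
    rw [this]
    exact pk_mem_K M hM n

lemma K_top (hM : 0 < M) (f : C(Set.Icc (-M) M, ℝ)) : f ∈ K M := by
  have h1 : f ∈ closure ((polynomialFunctions (Set.Icc (-M) M) : Set C(Set.Icc (-M) M, ℝ))) := by
    have := polynomialFunctions_closure_eq_top (-M) M
    have hf : f ∈ (polynomialFunctions (Set.Icc (-M) M)).topologicalClosure := by
      rw [this]; trivial
    exact hf
  have h2 : closure ((polynomialFunctions (Set.Icc (-M) M) : Set C(Set.Icc (-M) M, ℝ)))
      ⊆ (K M : Set C(Set.Icc (-M) M, ℝ)) := by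
    apply closure_minimal
    · exact fun g hg => poly_le_K M hM g hg
    · exact Submodule.isClosed_topologicalClosure _
  exact h2 h1

lemma mono_sup (hM : 0 < M) (k : ℕ) (hk : 1 ≤ k) {δ : ℝ} (hδ : 0 < δ) :
    ∃ (m : ℕ) (c u : Fin m → ℝ), ∀ y ∈ Set.Icc (-M) M,
      |y ^ k - ∑ i, c i * (y * Real.exp (-(u i) * y))| ≤ δ := by
  obtain ⟨k, rfl⟩ := Nat.exists_eq_add_of_le hk
  have h1 := pk_mem_closure M hM k
  have h2 : pk M (k + 1) ∈ closure ((V M : Set C(Set.Icc (-M) M, ℝ))) := h1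
  rw [Metric.mem_closure_iff] at h2
  obtain ⟨v, hv, hdist⟩ := h2 δ hδ
  obtain ⟨m, c, u, rfl⟩ := span_extract (w M) hv
  refine ⟨m, c, u, fun y hy => ?_⟩
  have h3 : ‖(pk M (k+1) - ∑ i, c i • w M (u i)) ⟨y, hy⟩‖
      ≤ ‖pk M (k+1) - ∑ i, c i • w M (u i)‖ := ContinuousMap.norm_coe_le_norm _ _
  rw [← dist_eq_norm] at h3
  have h4 := lt_of_le_of_lt h3 hdist
  have h5 : ((pk M (k+1) - ∑ i, c i • w M (u i)) ⟨y, hy⟩ : ℝ)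
      = y ^ (1 + k) - ∑ i, c i * (y * Real.exp (-(u i) * y)) := by
    simp [pk, w, add_comm 1 k]
  rw [Real.norm_eq_abs, h5] at h4
  exact le_of_lt h4

lemma cont_sup (hM : 0 < M) (f : C(Set.Icc (-M) M, ℝ)) {δ : ℝ} (hδ : 0 < δ) :
    ∃ (m : ℕ) (c u : Fin m → ℝ) (c₀ : ℝ), ∀ y : Set.Icc (-M) M,
      |f y - (c₀ + ∑ i, c i * ((y : ℝ) * Real.exp (-(u i) * y)))| ≤ δ := by
  set S : Submodule ℝ C(Set.Icc (-M) M, ℝ) :=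
    Submodule.span ℝ {(1 : C(Set.Icc (-M) M, ℝ))} ⊔ V M with hS
  have h1 : f ∈ closure ((S : Set C(Set.Icc (-M) M, ℝ))) := K_top M hM f
  rw [Metric.mem_closure_iff] at h1
  obtain ⟨g, hg, hdist⟩ := h1 δ hδ
  rw [hS, SetLike.mem_coe, Submodule.mem_sup] at hg
  obtain ⟨g₁, hg₁, v, hv, rfl⟩ := hg
  rw [Submodule.mem_span_singleton] at hg₁
  obtain ⟨c₀, rfl⟩ := hg₁
  obtain ⟨m, c, u, rfl⟩ := span_extract (w M) hv
  refine ⟨m, c, u, c₀, fun y => ?_⟩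
  have h3 : ‖(f - (c₀ • 1 + ∑ i, c i • w M (u i))) y‖
      ≤ ‖f - (c₀ • 1 + ∑ i, c i • w M (u i))‖ := ContinuousMap.norm_coe_le_norm _ _
  rw [← dist_eq_norm] at h3
  have h4 := lt_of_le_of_lt h3 hdist
  have h5 : ((f - (c₀ • 1 + ∑ i, c i • w M (u i))) y : ℝ)
      = f y - (c₀ + ∑ i, c i * ((y : ℝ) * Real.exp (-(u i) * y))) := by
    simp [w]
  rw [Real.norm_eq_abs, h5] at h4
  exact le_of_lt h4

end ExpAux

open ExpAux in
/-- for a probability measure on `[-M,M]`, the closed span in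
`L²(μ)` of `{y ↦ y e^{-uy}}` contains every monomial `y^k` (`k ≥ 1`), and
together with constants it is dense in `L²(μ)`. -/
theorem exp_loss_gradients_dense (M : ℝ) (hM : 0 < M)
    (μ : Measure ℝ) [IsProbabilityMeasure μ]
    (hsupp : ∀ᵐ y ∂μ, y ∈ Set.Icc (-M) M) :
    (∀ k : ℕ, 1 ≤ k → ∀ ε > (0 : ℝ), ∃ (m : ℕ) (c u : Fin m → ℝ),
        eLpNorm (fun y : ℝ => y ^ k - ∑ i, c i * (y * Real.exp (-(u i) * y))) 2 μ
          < ENNReal.ofReal ε) ∧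
    (∀ g : ℝ → ℝ, MemLp g 2 μ → ∀ ε > (0 : ℝ),
        ∃ (m : ℕ) (c u : Fin m → ℝ) (c₀ : ℝ),
        eLpNorm (fun y : ℝ =>
            g y - (c₀ + ∑ i, c i * (y * Real.exp (-(u i) * y)))) 2 μ
          < ENNReal.ofReal ε) := by
  constructor
  · intro k hk ε hε
    obtain ⟨m, c, u, hbound⟩ := mono_sup M hM k hk (half_pos hε)
    refine ⟨m, c, u, ?_⟩
    have hae : ∀ᵐ y ∂μ, ‖y ^ k - ∑ i, c i * (y * Real.exp (-(u i) * y))‖ ≤ ε / 2 := by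
      filter_upwards [hsupp] with y hy
      simpa [Real.norm_eq_abs] using hbound y hy
    calc eLpNorm (fun y : ℝ => y ^ k - ∑ i, c i * (y * Real.exp (-(u i) * y))) 2 μ
        ≤ μ Set.univ ^ (2 : ℝ≥0∞).toReal⁻¹ * ENNReal.ofReal (ε / 2) :=
          eLpNorm_le_of_ae_bound hae
      _ = ENNReal.ofReal (ε / 2) := by simp
      _ < ENNReal.ofReal ε := by
          rw [ENNReal.ofReal_lt_ofReal_iff hε]
          exact half_lt_self hε
  · intro g hg ε hε
    have hε4 : 0 < ε / 4 := by linarith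
    obtain ⟨h, _, hgh, hcont, _⟩ := hg.exists_hasCompactSupport_eLpNorm_sub_le
      (by norm_num) (ε := ENNReal.ofReal (ε / 4)) (by simp [hε4, ENNReal.ofReal_pos])
    set hC : C(Set.Icc (-M) M, ℝ) := ⟨fun y => h y, hcont.comp continuous_subtype_val⟩ with hhC
    obtain ⟨m, c, u, c₀, hbound⟩ := cont_sup M hM hC hε4
    refine ⟨m, c, u, c₀, ?_⟩
    set φ : ℝ → ℝ := fun y => c₀ + ∑ i, c i * (y * Real.exp (-(u i) * y)) with hφ
    have hφc : Continuous φ := by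
      apply continuous_const.add
      exact continuous_finset_sum _ (fun i _ => by fun_prop)
    have hsplit : (fun y : ℝ => g y - φ y) = (fun y => g y - h y) + (fun y => h y - φ y) := by
      funext y; simp only [Pi.add_apply]; ring
    have h2 : eLpNorm (fun y : ℝ => h y - φ y) 2 μ ≤ ENNReal.ofReal (ε / 4) := by
      have hae : ∀ᵐ y ∂μ, ‖h y - φ y‖ ≤ ε / 4 := by
        filter_upwards [hsupp] with y hy
        simpa [Real.norm_eq_abs, hφ, hhC] using hbound ⟨y, hy⟩
      calc eLpNorm (fun y : ℝ => h y - φ y) 2 μ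
          ≤ μ Set.univ ^ (2 : ℝ≥0∞).toReal⁻¹ * ENNReal.ofReal (ε / 4) :=
            eLpNorm_le_of_ae_bound hae
        _ = ENNReal.ofReal (ε / 4) := by simp
    calc eLpNorm (fun y : ℝ => g y - φ y) 2 μ
        = eLpNorm ((fun y => g y - h y) + (fun y => h y - φ y)) 2 μ := by rw [hsplit]
      _ ≤ eLpNorm (fun y : ℝ => g y - h y) 2 μ + eLpNorm (fun y : ℝ => h y - φ y) 2 μ :=
          eLpNorm_add_le (hg.aestronglyMeasurable.sub hcont.aestronglyMeasurable)
            (hcont.aestronglyMeasurable.sub hφc.aestronglyMeasurable) one_le_two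
      _ ≤ ENNReal.ofReal (ε / 4) + ENNReal.ofReal (ε / 4) := by
          gcongr
          exact hgh
      _ = ENNReal.ofReal (ε / 2) := by
          rw [← ENNReal.ofReal_add (by linarith) (by linarith)]
          congr 1; ring
      _ < ENNReal.ofReal ε := by
          rw [ENNReal.ofReal_lt_ofReal_iff hε]
          linarith
end
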